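/- Let a, b, c, d be positive reals satisfying the stability conditions a > (4/3)c and b > (4/3)d. If both (c − d)(bc − ad) = 0 and (c − d)(c − d + b − a) = 0 hold, then c = d. In other words, for a two-layer Backus medium, δ = 0 and ε = 0 together imply the constant-rigidity condition c = d (isotropy of the average). -/
import Mathlib


/-- Under the stability conditions, `δ = 0` and `ε = 0` (in their factored forms)
together force constant rigidity `c = d`. -/
theorem delta_and_epsilon_zero_implies_isotropy (a b c d : ℝ)
    (ha : 0 < a) (hb : 0 < b) (hc : 0 < c) (hd : 0 < d)
    (hac : a > 4 / 3 * c) (hbd : b > 4 / 3 * d)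
    (h1 : (c - d) * (b * c - a * d) = 0)
    (h2 : (c - d) * (c - d + b - a) = 0) :
    c = d := by
  by_contra h
  have hcd : c - d ≠ 0 := sub_ne_zero.mpr h
  have e1 : b * c - a * d = 0 := by
    rcases mul_eq_zero.mp h1 with h' | h'
    · exact absurd h' hcd
    · exact h'
  have e2 : c - d + b - a = 0 := by
    rcases mul_eq_zero.mp h2 with h' | h'
    · exact absurd h' hcd
    · exact h'
  have hac' : a = c := by
    have : a * (c - d) = c * (c - d) := by nlinarith
    exact mul_right_cancel₀ hcd this
  have hbd' : b = d := by nlinarith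
  nlinarith
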